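/- Let p ≥ 1, α > 1, A > 0, and let (m_j)_{j≥1} be a sequence of real numbers for which there exist constants a, b with 0 < a ≤ m_j ≤ b < ∞ for all j, and suppose m_{j+1}^{1/(αp)} ≤ A · 2^{j+3} · m_j^{1/p} for all j ≥ 1. Then 1 ≤ 2^{pα²/(α−1)² + 3pα/(α−1)} · A^{pα/(α−1)} · m_1. -/

import Mathlib

open Finset Filter Topology

/-- Abstract iteration lemma: if `0 < a ≤ m_j ≤ b` for all `j ≥ 1` and
`m_{j+1}^{1/(αp)} ≤ A · 2^{j+3} · m_j^{1/p}` for all `j ≥ 1`, then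
`1 ≤ 2^{pα²/(α-1)² + 3pα/(α-1)} · A^{pα/(α-1)} · m_1`. -/
theorem iteration_lemma
    (p α A : ℝ) (hp : 1 ≤ p) (hα : 1 < α) (hA : 0 < A)
    (m : ℕ → ℝ) (a b : ℝ) (ha : 0 < a)
    (hbound : ∀ j : ℕ, 1 ≤ j → a ≤ m j ∧ m j ≤ b)
    (hiter : ∀ j : ℕ, 1 ≤ j →
      m (j + 1) ^ (1 / (α * p)) ≤ A * 2 ^ (j + 3) * m j ^ (1 / p)) :
    1 ≤ 2 ^ (p * α ^ 2 / (α - 1) ^ 2 + 3 * p * α / (α - 1)) *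
          A ^ (p * α / (α - 1)) * m 1 := by
  have hα0 : (0:ℝ) < α := lt_trans one_pos hα
  have hp0 : (0:ℝ) < p := lt_of_lt_of_le one_pos hp
  have hα1 : α - 1 ≠ 0 := sub_ne_zero.2 (ne_of_gt hα)
  set x : ℝ := 1/α with hxdef
  have hx0 : 0 < x := by positivity
  have hx1 : x < 1 := by rw [hxdef, div_lt_one hα0]; exact hα
  have hm : ∀ j, 1 ≤ j → 0 < m j := fun j hj => ha.trans_le (hbound j hj).1
  set S : ℕ → ℝ := fun j => ∑ k ∈ range j, x ^ k with hSdef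
  set T : ℕ → ℝ := fun j => ∑ k ∈ range j, ((k:ℝ) + 4) * x ^ k with hTdef
  have key : ∀ j : ℕ, m (j+1) ^ (x ^ j) ≤ m 1 * A ^ (p * S j) * 2 ^ (p * T j) := by
    intro j
    induction j with
    | zero => simp [hSdef, hTdef]
    | succ j ih =>
      have hmj1 : 0 < m (j+1) := hm (j+1) le_add_self
      have hmj2 : 0 < m (j+1+1) := hm (j+2) le_add_self
      have e0 : (0:ℝ) ≤ p * x ^ j := by positivity
      have h1 := hiter (j+1) le_add_self
      have h2 : (m (j+1+1) ^ (1/(α*p))) ^ (p * x ^ j)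
          ≤ (A * 2 ^ (j+1+3) * m (j+1) ^ (1/p)) ^ (p * x ^ j) :=
        Real.rpow_le_rpow (Real.rpow_nonneg hmj2.le _) h1 e0
      have eqL : (m (j+1+1) ^ (1/(α*p))) ^ (p * x ^ j) = m (j+1+1) ^ (x ^ (j+1)) := by
        rw [← Real.rpow_mul hmj2.le]
        congr 1
        rw [hxdef]
        field_simp
        ring_nf
        rw [mul_inv_cancel₀ hα0.ne', one_mul]
      have eqR : (A * 2 ^ (j+1+3) * m (j+1) ^ (1/p)) ^ (p * x ^ j)
          = A ^ (p * x ^ j) * 2 ^ (((j:ℝ)+4) * (p * x ^ j)) * m (j+1) ^ (x ^ j) := by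
        rw [Real.mul_rpow (by positivity) (by positivity),
            Real.mul_rpow (by positivity) (by positivity),
            ← Real.rpow_natCast (2:ℝ) (j+1+3), ← Real.rpow_mul (by norm_num : (0:ℝ) ≤ 2),
            ← Real.rpow_mul hmj1.le]
        congr 2
        · push_cast; ring
        · field_simp
      have h3 : m (j+1+1) ^ (x ^ (j+1))
          ≤ A ^ (p * x ^ j) * 2 ^ (((j:ℝ)+4) * (p * x ^ j)) * (m 1 * A ^ (p * S j) * 2 ^ (p * T j)) := by
        rw [← eqL]
        refine h2.trans ?_
        rw [eqR]
        exact mul_le_mul_of_nonneg_left ih (by positivity)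
      refine h3.trans_eq ?_
      have hS' : p * S (j+1) = p * S j + p * x ^ j := by
        simp only [hSdef, sum_range_succ]; ring
      have hT' : p * T (j+1) = p * T j + ((j:ℝ)+4) * (p * x ^ j) := by
        simp only [hTdef, sum_range_succ]; ring
      rw [hS', hT', Real.rpow_add hA, Real.rpow_add (by norm_num : (0:ℝ) < 2)]
      ring
  -- pointwise inequality with lower bound a
  have hpt : ∀ j : ℕ, a ^ (x ^ j) ≤ m 1 * A ^ (p * S j) * 2 ^ (p * T j) := by
    intro j
    refine le_trans ?_ (key j)
    exact Real.rpow_le_rpow ha.le (hbound (j+1) le_add_self).1 (by positivity)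
  -- limits
  have hx' : Tendsto (fun j : ℕ => x ^ j) atTop (𝓝 0) :=
    tendsto_pow_atTop_nhds_zero_of_lt_one hx0.le hx1
  have hL : Tendsto (fun j : ℕ => a ^ (x ^ j)) atTop (𝓝 1) := by
    have hc : ContinuousAt (fun t : ℝ => a ^ t) 0 := Real.continuousAt_const_rpow ha.ne'
    have := hc.tendsto.comp hx'
    simpa [Real.rpow_zero, Function.comp_def] using this
  have hSsum : HasSum (fun k : ℕ => x ^ k) (1 - x)⁻¹ :=
    hasSum_geometric_of_lt_one hx0.le hx1
  have hTsum : HasSum (fun k : ℕ => ((k:ℝ) + 4) * x ^ k) (x / (1 - x) ^ 2 + 4 * (1 - x)⁻¹) := by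
    have h1 : HasSum (fun k : ℕ => (k:ℝ) * x ^ k) (x / (1 - x) ^ 2) := by
      have := hasSum_coe_mul_geometric_of_norm_lt_one
        (r := x) (by rwa [Real.norm_eq_abs, abs_of_pos hx0])
      exact this
    have h2 : HasSum (fun k : ℕ => 4 * x ^ k) (4 * (1 - x)⁻¹) := hSsum.mul_left 4
    have h := h1.add h2
    have heq : (fun k : ℕ => (k:ℝ) * x ^ k + 4 * x ^ k) = fun k : ℕ => ((k:ℝ) + 4) * x ^ k := by
      funext k; ring
    rwa [heq] at h
  have hSt : Tendsto S atTop (𝓝 ((1 - x)⁻¹)) := hSsum.tendsto_sum_nat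
  have hTt : Tendsto T atTop (𝓝 (x / (1 - x) ^ 2 + 4 * (1 - x)⁻¹)) := hTsum.tendsto_sum_nat
  have hAc : Continuous (fun t : ℝ => A ^ t) :=
    continuous_iff_continuousAt.2 fun _ => Real.continuousAt_const_rpow hA.ne'
  have h2c : Continuous (fun t : ℝ => (2:ℝ) ^ t) :=
    continuous_iff_continuousAt.2 fun _ => Real.continuousAt_const_rpow (by norm_num : (2:ℝ) ≠ 0)
  have hR : Tendsto (fun j : ℕ => m 1 * A ^ (p * S j) * 2 ^ (p * T j)) atTop
      (𝓝 (m 1 * A ^ (p * (1 - x)⁻¹) * 2 ^ (p * (x / (1 - x) ^ 2 + 4 * (1 - x)⁻¹)))) := by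
    refine Tendsto.mul (Tendsto.mul tendsto_const_nhds ?_) ?_
    · exact (hAc.tendsto _).comp (tendsto_const_nhds.mul hSt)
    · exact (h2c.tendsto _).comp (tendsto_const_nhds.mul hTt)
  have hfin : (1:ℝ) ≤ m 1 * A ^ (p * (1 - x)⁻¹) * 2 ^ (p * (x / (1 - x) ^ 2 + 4 * (1 - x)⁻¹)) :=
    le_of_tendsto_of_tendsto' hL hR hpt
  have e1 : p * (1 - x)⁻¹ = p * α / (α - 1) := by
    rw [hxdef]; field_simp
  have e2 : p * (x / (1 - x) ^ 2 + 4 * (1 - x)⁻¹)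
      = p * α ^ 2 / (α - 1) ^ 2 + 3 * p * α / (α - 1) := by
    rw [hxdef]
    have h1x : 1 - 1/α = (α - 1)/α := by field_simp
    rw [h1x]
    field_simp
    ring_nf
  rw [e1, e2] at hfin
  linarith [hfin]
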